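/- Assume M is strongly ω-homogeneous over A. Let X ⊆ Mᵏ be the set of realizations in M of an L-formula with parameters from A in k free variables, let f : Aut(M/A) → X be a function, let b̄ be an n-tuple from M and φ(x̄,ȳ,z̄) an L-formula with parameters from A such that for all σ ∈ Aut(M/A) and all c̄ ∈ X: f(σ) = c̄ if and only if M ⊨ φ(σ(b̄), b̄, c̄), and let ψ(x̄) be an L-formula with parameters from A isolating tp(b̄/A). Then for every n-tuple ā from M with M ⊨ ψ(ā), there is exactly one k-tuple c̄ ∈ X with M ⊨ φ(ā, b̄, c̄); i.e., M ⊨ ∀x̄(ψ(x̄) → ∃!z̄ (z̄ ∈ X ∧ φ(x̄, b̄, z̄))). -/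
import Mathlib


open FirstOrder FirstOrder.Language

universe u v w

section Defs

variable (L : FirstOrder.Language.{u, v}) (M : Type w) [L.Structure M]

/-- `Aut(M/A)`: the group of `L`-automorphisms of `M` fixing `A` pointwise, realized as a
subgroup of `Equiv.Perm M`. -/
def autFix (A : Set M) : Subgroup (Equiv.Perm M) where
  carrier := {σ | (∃ e : M ≃[L] M, ⇑e = ⇑σ) ∧ ∀ a ∈ A, σ a = a}
  one_mem' := ⟨⟨Language.Equiv.refl L M, funext fun x => by simp⟩, fun a _ => rfl⟩
  mul_mem' := by
    rintro σ τ ⟨⟨e, he⟩, hσ⟩ ⟨⟨f, hf⟩, hτ⟩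
    refine ⟨⟨e.comp f, funext fun x => ?_⟩, fun a ha => ?_⟩
    · simp only [Language.Equiv.comp_apply, he, hf]; rfl
    · simp only [Equiv.Perm.mul_apply, hτ a ha, hσ a ha]
  inv_mem' := by
    rintro σ ⟨⟨e, he⟩, hσ⟩
    refine ⟨⟨e.symm, funext fun x => ?_⟩, fun a ha => ?_⟩
    · have : e (σ⁻¹ x) = x := by rw [show (e : M → M) = ⇑σ from he]; simp
      simpa using congrArg e.symm this |>.symm.trans (by simp)
    · have : σ a = a := hσ a ha
      calc σ⁻¹ a = σ⁻¹ (σ a) := by rw [this]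
      _ = a := by simp

variable {L M}

/-- `M` is strongly `ω`-homogeneous over `A`: any two finite tuples satisfying the same
formulas with parameters from `A` are conjugate under `Aut(M/A)`. -/
def StronglyOmegaHomOver (A : Set M) : Prop :=
  ∀ (n : ℕ) (a b : Fin n → M),
    (∀ φ : (L[[A]]).Formula (Fin n), φ.Realize a ↔ φ.Realize b) →
    ∃ σ ∈ autFix L M A, ∀ i, σ (a i) = b i

/-- `ψ` isolates the type of `b` over `A`: `ψ` is satisfied by `b`, and implies every formula
with parameters from `A` satisfied by `b`. -/
def Isolates (A : Set M) {n : ℕ} (ψ : (L[[A]]).Formula (Fin n)) (b : Fin n → M) : Prop :=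
  ψ.Realize b ∧ ∀ χ : (L[[A]]).Formula (Fin n), χ.Realize b →
    ∀ a : Fin n → M, ψ.Realize a → χ.Realize a

end Defs

variable {L : FirstOrder.Language.{u, v}} {M : Type w} [L.Structure M]

/-- If `M` is strongly `ω`-homogeneous over `A`, `f : Aut(M/A) → X` has definable graph via
`φ` and `b̄`, and `ψ` isolates `tp(b̄/A)`, then for every realization `ā` of `ψ` in `M`
there is exactly one `c̄ ∈ X` with `M ⊨ φ(ā, b̄, c̄)`. -/
noncomputable def autFixToEquivWC (A : Set M) (σ : autFix L M A) : M ≃[L[[A]]] M where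
  toEquiv := σ.1
  map_fun' := by
    intro m g x
    obtain ⟨⟨e, he⟩, hfix⟩ := σ.2
    cases g with
    | inl g =>
      have := e.map_fun g x
      rw [he] at this
      exact this
    | inr c =>
      cases m with
      | zero =>
        exact hfix c c.2
      | succ m => exact isEmptyElim c
  map_rel' := by
    intro m r x
    obtain ⟨⟨e, he⟩, _⟩ := σ.2
    cases r with
    | inl r =>
      have := e.map_rel r x
      rw [he] at this
      exact this
    | inr r => exact isEmptyElim r

theorem autFix_realize_formula (A : Set M) (σ : autFix L M A) {m : ℕ}
    (χ : (L[[A]]).Formula (Fin m)) (v : Fin m → M) :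
    χ.Realize (fun i => σ.1 (v i)) ↔ χ.Realize v := by
  have h := StrongHomClass.realize_formula (autFixToEquivWC A σ) χ (v := v)
  have hco : ⇑(autFixToEquivWC A σ) = ⇑σ.1 := rfl
  rw [hco] at h
  exact h

theorem statement15 (A : Set M) (hhom : StronglyOmegaHomOver (L := L) A)
    (k n : ℕ) (θX : (L[[A]]).Formula (Fin k))
    (f : autFix L M A → (Fin k → M)) (hf : ∀ σ, θX.Realize (f σ))
    (b : Fin n → M) (φ : (L[[A]]).Formula ((Fin n ⊕ Fin n) ⊕ Fin k))
    (hgraph : ∀ (σ : autFix L M A) (c : Fin k → M), θX.Realize c →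
      (f σ = c ↔ φ.Realize (Sum.elim (Sum.elim (fun i => σ.1 (b i)) b) c)))
    (ψ : (L[[A]]).Formula (Fin n)) (hiso : Isolates (L := L) A ψ b) :
    ∀ a : Fin n → M, ψ.Realize a →
      ∃! c : Fin k → M, θX.Realize c ∧ φ.Realize (Sum.elim (Sum.elim a b) c) := by
  intro a ha
  -- a and b satisfy the same formulas over A
  have hsame : ∀ χ : (L[[A]]).Formula (Fin n), χ.Realize b ↔ χ.Realize a := by
    intro χ
    constructor
    · intro hb
      exact hiso.2 χ hb a ha
    · intro haχ
      by_contra hb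
      have : χ.not.Realize b := by
        rw [Formula.realize_not]
        exact hb
      exact Formula.realize_not.mp (hiso.2 χ.not this a ha) haχ
  obtain ⟨σ, hσmem, hσb⟩ := hhom n b a hsame
  set τ : autFix L M A := ⟨σ, hσmem⟩ with hτ
  set c := f τ with hc
  have hcX : θX.Realize c := hf τ
  have hab : (fun i => τ.1 (b i)) = a := funext hσb
  have hφc : φ.Realize (Sum.elim (Sum.elim a b) c) := by
    have := (hgraph τ c hcX).mp rfl
    rwa [hab] at this
  refine ⟨c, ⟨hcX, hφc⟩, ?_⟩
  rintro c' ⟨hc'X, hφc'⟩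
  have : φ.Realize (Sum.elim (Sum.elim (fun i => τ.1 (b i)) b) c') := by
    rwa [hab]
  exact ((hgraph τ c' hc'X).mpr this).symm
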